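/- Dirac's formula for the distributional derivative of log x (branch with log(−1) = −iπ): Define L : ℝ∖{0} → ℂ by L(x) = log|x| for x > 0 and L(x) = log|x| − iπ for x < 0. Then for every Schwartz function φ : ℝ → ℂ, −∫_ℝ L(x)·φ′(x) dx = lim_{ε→0⁺} ∫_{|x|>ε} φ(x)/x dx + iπ·φ(0). -/

import Mathlib

open MeasureTheory Filter Real

/-- The complex logarithm of a real number in the branch with `log(−1) = −iπ`. -/
noncomputable def branchLog (x : ℝ) : ℂ :=
  if x < 0 then ((Real.log |x| : ℝ) : ℂ) - Complex.I * (π : ℂ) else ((Real.log |x| : ℝ) : ℂ)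

open Set Topology


lemma abs_log_le_rpow {x : ℝ} (h0 : 0 < x) (h1 : x ≤ 1) :
    |Real.log x| ≤ 2 * x ^ (-(1/2) : ℝ) := by
  have hy : (0:ℝ) < x ^ (-(1/2):ℝ) := Real.rpow_pos_of_pos h0 _
  have h2 : Real.log (x ^ (-(1/2):ℝ)) = -(1/2) * Real.log x := Real.log_rpow h0 _
  have h3 := Real.log_le_sub_one_of_pos hy
  rw [h2] at h3
  rw [abs_of_nonpos (Real.log_nonpos h0.le h1)]
  linarith

lemma intervalIntegrable_abs_log01 :
    IntervalIntegrable (fun x : ℝ => |Real.log x|) volume 0 1 := by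
  rw [intervalIntegrable_iff_integrableOn_Ioc_of_le zero_le_one]
  have hb : IntegrableOn (fun x : ℝ => 2 * x ^ (-(1/2) : ℝ)) (Ioc 0 1) := by
    have h := intervalIntegral.intervalIntegrable_rpow' (a := 0) (b := 1)
      (r := -(1/2)) (by norm_num)
    rw [intervalIntegrable_iff_integrableOn_Ioc_of_le zero_le_one] at h
    exact h.const_mul 2
  refine MeasureTheory.Integrable.mono' hb ((Real.measurable_log.abs).aestronglyMeasurable) ?_
  filter_upwards [ae_restrict_mem measurableSet_Ioc] with x hx
  rw [Real.norm_eq_abs, abs_abs]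
  exact abs_log_le_rpow hx.1 hx.2

lemma intervalIntegrable_abs_log :
    IntervalIntegrable (fun x : ℝ => |Real.log x|) volume (-1) 1 := by
  have h1 := intervalIntegrable_abs_log01
  have h2 := h1.comp_mul_left (c := -1)
  norm_num [Real.log_neg_eq_log] at h2
  exact h2.symm.trans h1

lemma integrable_log_mul_schwartz (ψ : SchwartzMap ℝ ℂ) :
    Integrable (fun x : ℝ => (Real.log x : ℂ) * ψ x) := by
  have hmeas : AEStronglyMeasurable (fun x : ℝ => (Real.log x : ℂ) * ψ x) volume :=
    ((Complex.measurable_ofReal.comp Real.measurable_log).mul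
      ψ.continuous.measurable).aestronglyMeasurable
  have hnorm : ∀ x : ℝ, ‖(Real.log x : ℂ) * ψ x‖ = |Real.log x| * ‖ψ x‖ := by
    intro x; rw [norm_mul, Complex.norm_real, Real.norm_eq_abs]
  have hA : IntegrableOn (fun x : ℝ => (Real.log x : ℂ) * ψ x) (Ioc (-1) 1) := by
    set C := SchwartzMap.seminorm ℝ 0 0 ψ with hC
    have h1 : IntegrableOn (fun x : ℝ => C * |Real.log x|) (Ioc (-1) 1) := by
      have := intervalIntegrable_abs_log
      rw [intervalIntegrable_iff_integrableOn_Ioc_of_le (by norm_num)] at this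
      exact this.const_mul C
    refine MeasureTheory.Integrable.mono' h1 hmeas.restrict ?_
    filter_upwards with x
    rw [hnorm x, mul_comm]
    gcongr
    exact SchwartzMap.norm_le_seminorm ℝ ψ x
  have hB : IntegrableOn (fun x : ℝ => (Real.log x : ℂ) * ψ x) (Ioc (-1) 1)ᶜ := by
    have h2 := ψ.integrable_pow_mul volume 1
    refine MeasureTheory.Integrable.mono' h2.restrict hmeas.restrict ?_
    filter_upwards [ae_restrict_mem measurableSet_Ioc.compl] with x hx
    simp only [mem_compl_iff, mem_Ioc, not_and_or, not_lt, not_le] at hx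
    have hx1 : 1 ≤ |x| := by
      rcases hx with h | h
      · rw [abs_of_nonpos (by linarith)]; linarith
      · rw [abs_of_pos (by linarith)]; linarith
    have hlog : |Real.log x| ≤ |x| := by
      rw [← Real.log_abs, abs_of_nonneg (Real.log_nonneg hx1)]
      linarith [Real.log_le_sub_one_of_pos (show (0:ℝ) < |x| by linarith)]
    rw [hnorm x, pow_one, Real.norm_eq_abs]
    gcongr
  have := hA.union hB
  rwa [union_compl_self, integrableOn_univ] at this


lemma schwartz_bound (φ : SchwartzMap ℝ ℂ) (k : ℕ) :
    ∃ C : ℝ, ∀ x : ℝ, ‖x‖ ^ k * ‖φ x‖ ≤ C := by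
  refine ⟨SchwartzMap.seminorm ℝ k 0 φ, fun x => ?_⟩
  have := SchwartzMap.le_seminorm ℝ k 0 φ x
  simpa [norm_iteratedFDeriv_zero] using this

lemma schwartz_tendsto_atBot (φ : SchwartzMap ℝ ℂ) :
    Tendsto (fun x : ℝ => φ x) atBot (nhds 0) := by
  obtain ⟨C, hC⟩ := schwartz_bound φ 1
  refine squeeze_zero_norm' (a := fun x : ℝ => C * (-x)⁻¹) ?_ ?_
  · filter_upwards [eventually_le_atBot (-1 : ℝ)] with x hx
    have h1 : (0:ℝ) < -x := by linarith
    have h2 := hC x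
    rw [pow_one, Real.norm_eq_abs, abs_of_nonpos (by linarith)] at h2
    calc ‖φ x‖ = (-x)⁻¹ * (-x * ‖φ x‖) := (inv_mul_cancel_left₀ h1.ne' _).symm
      _ ≤ (-x)⁻¹ * C := by gcongr
      _ = C * (-x)⁻¹ := mul_comm _ _
  · have : Tendsto (fun x : ℝ => -x) atBot atTop := tendsto_neg_atBot_atTop
    simpa using (tendsto_inv_atTop_zero.comp this).const_mul C

lemma schwartz_log_tendsto_atTop (φ : SchwartzMap ℝ ℂ) :
    Tendsto (fun x : ℝ => (Real.log x : ℂ) * φ x) atTop (nhds 0) := by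
  obtain ⟨C, hC⟩ := schwartz_bound φ 2
  refine squeeze_zero_norm' (a := fun x : ℝ => C * x⁻¹) ?_ ?_
  · filter_upwards [eventually_ge_atTop (1 : ℝ)] with x hx
    have h0 : (0:ℝ) < x := by linarith
    have h2 := hC x
    rw [Real.norm_eq_abs, abs_of_pos h0] at h2
    have hlog : |Real.log x| ≤ x := by
      rw [abs_of_nonneg (Real.log_nonneg hx)]
      linarith [Real.log_le_sub_one_of_pos h0]
    calc ‖(Real.log x : ℂ) * φ x‖ = |Real.log x| * ‖φ x‖ := by
          rw [norm_mul, Complex.norm_real, Real.norm_eq_abs]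
      _ ≤ x * ‖φ x‖ := by gcongr
      _ = x⁻¹ * (x ^ 2 * ‖φ x‖) := by field_simp
      _ ≤ x⁻¹ * C := by gcongr
      _ = C * x⁻¹ := mul_comm _ _
  · simpa using tendsto_inv_atTop_zero.const_mul C

lemma schwartz_log_tendsto_atBot (φ : SchwartzMap ℝ ℂ) :
    Tendsto (fun x : ℝ => (Real.log x : ℂ) * φ x) atBot (nhds 0) := by
  obtain ⟨C, hC⟩ := schwartz_bound φ 2
  refine squeeze_zero_norm' (a := fun x : ℝ => C * (-x)⁻¹) ?_ ?_
  · filter_upwards [eventually_le_atBot (-1 : ℝ)] with x hx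
    have h0 : (0:ℝ) < -x := by linarith
    have h2 := hC x
    rw [Real.norm_eq_abs, abs_of_nonpos (by linarith)] at h2
    have hlog : |Real.log x| ≤ -x := by
      rw [← Real.log_abs, abs_of_nonneg (Real.log_nonneg (by rw [abs_of_nonpos (by linarith)]; linarith)),
        abs_of_nonpos (by linarith : x ≤ 0)]
      linarith [Real.log_le_sub_one_of_pos h0]
    calc ‖(Real.log x : ℂ) * φ x‖ = |Real.log x| * ‖φ x‖ := by
          rw [norm_mul, Complex.norm_real, Real.norm_eq_abs]
      _ ≤ (-x) * ‖φ x‖ := by gcongr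
      _ = (-x)⁻¹ * ((-x) ^ 2 * ‖φ x‖) := by field_simp
      _ ≤ (-x)⁻¹ * C := by gcongr
      _ = C * (-x)⁻¹ := mul_comm _ _
  · have : Tendsto (fun x : ℝ => -x) atBot atTop := tendsto_neg_atBot_atTop
    simpa using (tendsto_inv_atTop_zero.comp this).const_mul C


lemma measurable_phidiv (φ : SchwartzMap ℝ ℂ) :
    AEStronglyMeasurable (fun x : ℝ => φ x / (x : ℂ)) volume :=
  (φ.continuous.measurable.div Complex.measurable_ofReal).aestronglyMeasurable

lemma integrableOn_phidiv (φ : SchwartzMap ℝ ℂ) {ε : ℝ} (hε : 0 < ε) {s : Set ℝ}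
    (hsm : MeasurableSet s) (hs : ∀ x ∈ s, ε ≤ |x|) :
    IntegrableOn (fun x : ℝ => φ x / (x : ℂ)) s := by
  have hmeas := measurable_phidiv φ
  refine MeasureTheory.Integrable.mono'
    (((φ.integrable (μ := volume)).norm.const_mul ε⁻¹).restrict) hmeas.restrict ?_
  filter_upwards [ae_restrict_mem hsm] with x hx
  have hxa : ε ≤ |x| := hs x hx
  have hx0 : (0:ℝ) < |x| := lt_of_lt_of_le hε hxa
  rw [norm_div, Complex.norm_real, Real.norm_eq_abs]
  calc ‖φ x‖ / |x| ≤ ‖φ x‖ / ε := by gcongr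
    _ = ε⁻¹ * ‖φ x‖ := by rw [div_eq_inv_mul]

lemma hasDerivAt_F (φ : SchwartzMap ℝ ℂ) {x : ℝ} (hx : x ≠ 0) :
    HasDerivAt (fun y : ℝ => (Real.log y : ℂ) * φ y)
      (φ x / (x : ℂ) + (Real.log x : ℂ) * (SchwartzMap.derivCLM ℝ ℂ φ) x) x := by
  have hψ : HasDerivAt (fun y : ℝ => φ y) ((SchwartzMap.derivCLM ℝ ℂ φ) x) x := by
    have := (φ.differentiable x).hasDerivAt
    rwa [← SchwartzMap.derivCLM_apply (𝕜 := ℝ)] at this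
  have h1 := ((Real.hasDerivAt_log hx).ofReal_comp).mul hψ
  have h2 : φ x / (x : ℂ) + (Real.log x : ℂ) * (SchwartzMap.derivCLM ℝ ℂ φ) x
      = ((x⁻¹ : ℝ) : ℂ) * φ x + (Real.log x : ℂ) * (SchwartzMap.derivCLM ℝ ℂ φ) x := by
    push_cast
    rw [div_eq_mul_inv, mul_comm (φ x) _]
  rw [h2]
  exact h1

lemma set_eq {ε : ℝ} : {x : ℝ | ε < |x|} = Iio (-ε) ∪ Ioi ε := by
  ext x
  simp only [mem_setOf_eq, lt_abs, mem_union, mem_Iio, mem_Ioi, lt_neg]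
  tauto

lemma key_identity (φ : SchwartzMap ℝ ℂ) {ε : ℝ} (hε : 0 < ε) :
    ∫ x in {x : ℝ | ε < |x|}, φ x / (x : ℂ) =
      -(∫ x in {x : ℝ | ε < |x|}, (Real.log x : ℂ) * (SchwartzMap.derivCLM ℝ ℂ φ) x)
        + (Real.log ε : ℂ) * (φ (-ε) - φ ε) := by
  set ψ := SchwartzMap.derivCLM ℝ ℂ φ with hψdef
  set G := fun x : ℝ => (Real.log x : ℂ) * ψ x with hGdef
  have hG : Integrable G := integrable_log_mul_schwartz ψ
  -- integrability of φ/x on half lines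
  have hdivIoi : IntegrableOn (fun x : ℝ => φ x / (x : ℂ)) (Ioi ε) :=
    integrableOn_phidiv φ hε measurableSet_Ioi
      (fun x hx => by rw [abs_of_pos (lt_trans hε hx)]; exact le_of_lt hx)
  have hdivIic : IntegrableOn (fun x : ℝ => φ x / (x : ℂ)) (Iic (-ε)) :=
    integrableOn_phidiv φ hε measurableSet_Iic
      (fun x hx => by rw [abs_of_neg (by simp at hx; linarith)]; simp at hx ⊢; linarith)
  have hdivIio : IntegrableOn (fun x : ℝ => φ x / (x : ℂ)) (Iio (-ε)) :=
    hdivIic.mono_set Iio_subset_Iic_self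
  -- FTC on (ε, ∞)
  have hIoi : ∫ x in Ioi ε, (φ x / (x : ℂ) + G x)
      = 0 - (Real.log ε : ℂ) * φ ε := by
    refine integral_Ioi_of_hasDerivAt_of_tendsto'
      (f := fun y : ℝ => (Real.log y : ℂ) * φ y)
      (fun x hx => hasDerivAt_F φ (lt_of_lt_of_le hε hx).ne')
      (hdivIoi.add hG.integrableOn) (schwartz_log_tendsto_atTop φ)
  have hIic : ∫ x in Iic (-ε), (φ x / (x : ℂ) + G x)
      = (Real.log (-ε) : ℂ) * φ (-ε) - 0 := by
    refine integral_Iic_of_hasDerivAt_of_tendsto'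
      (f := fun y : ℝ => (Real.log y : ℂ) * φ y)
      (fun x hx => hasDerivAt_F φ (by have : x ≤ -ε := hx; intro h; rw [h] at this; linarith))
      (hdivIic.add hG.integrableOn) (schwartz_log_tendsto_atBot φ)
  have hIoi' : ∫ x in Ioi ε, φ x / (x : ℂ)
      = -((Real.log ε : ℂ) * φ ε) - ∫ x in Ioi ε, G x := by
    have := integral_add hdivIoi hG.integrableOn
    rw [hIoi] at this
    linear_combination -this
  have hIio' : ∫ x in Iio (-ε), φ x / (x : ℂ)
      = (Real.log ε : ℂ) * φ (-ε) - ∫ x in Iio (-ε), G x := by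
    have h1 : ∫ x in Iio (-ε), (φ x / (x : ℂ) + G x)
        = ∫ x in Iic (-ε), (φ x / (x : ℂ) + G x) := setIntegral_congr_set Iio_ae_eq_Iic
    rw [hIic, Real.log_neg_eq_log] at h1
    have := integral_add hdivIio hG.integrableOn
    rw [h1] at this
    linear_combination -this
  have hdisj : Disjoint (Iio (-ε)) (Ioi ε) := by
    refine Set.disjoint_left.2 fun x hx hx' => ?_
    simp only [mem_Iio, mem_Ioi] at hx hx'
    linarith
  rw [set_eq, setIntegral_union hdisj measurableSet_Ioi hdivIio hdivIoi,
    setIntegral_union hdisj measurableSet_Ioi hG.integrableOn hG.integrableOn,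
    hIoi', hIio']
  ring


lemma compl_eq {ε : ℝ} : {x : ℝ | ε < |x|} = (Icc (-ε) ε)ᶜ := by
  ext x
  simp [mem_setOf_eq, mem_compl_iff, mem_Icc, ← abs_le, not_le]

lemma trunc_tendsto {G : ℝ → ℂ} (hG : Integrable G) :
    Tendsto (fun ε : ℝ => ∫ x in {x : ℝ | ε < |x|}, G x)
      (nhdsWithin 0 (Set.Ioi 0)) (nhds (∫ x : ℝ, G x)) := by
  have hfun : ∀ ε : ℝ, ∫ x in {x : ℝ | ε < |x|}, G x
      = (∫ x : ℝ, G x) - ∫ x in Icc (-ε) ε, G x := by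
    intro ε
    rw [compl_eq]
    have := integral_add_compl (measurableSet_Icc (a := -ε) (b := ε)) hG
    linear_combination this
  simp only [hfun]
  have hIcc : Tendsto (fun ε : ℝ => ∫ x in Icc (-ε) ε, G x)
      (nhdsWithin 0 (Set.Ioi 0)) (nhds 0) := by
    set P : ℝ → ℝ := fun t => ∫ x in (0:ℝ)..t, ‖G x‖ with hP
    have hInt : ∀ a b : ℝ, IntervalIntegrable (fun x => ‖G x‖) volume a b :=
      fun a b => hG.norm.intervalIntegrable
    have hPc : Continuous P := intervalIntegral.continuous_primitive hInt 0
    refine squeeze_zero_norm' (a := fun ε : ℝ => P ε - P (-ε)) ?_ ?_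
    · filter_upwards [self_mem_nhdsWithin] with ε (hε : (0:ℝ) < ε)
      have h1 : ‖∫ x in Icc (-ε) ε, G x‖ ≤ ∫ x in Icc (-ε) ε, ‖G x‖ :=
        norm_integral_le_integral_norm _
      have h2 : ∫ x in Icc (-ε) ε, ‖G x‖ = ∫ x in Ioc (-ε) ε, ‖G x‖ :=
        (setIntegral_congr_set Ioc_ae_eq_Icc).symm
      have h3 : ∫ x in Ioc (-ε) ε, ‖G x‖ = ∫ x in (-ε)..ε, ‖G x‖ :=
        (intervalIntegral.integral_of_le (by linarith)).symm
      have h4 : P ε - P (-ε) = ∫ x in (-ε)..ε, ‖G x‖ :=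
        intervalIntegral.integral_interval_sub_left (hInt 0 ε) (hInt 0 (-ε))
      rw [h4]
      exact h1.trans (le_of_eq (h2.trans h3))
    · have h5 : Tendsto (fun ε : ℝ => P ε - P (-ε)) (nhds 0) (nhds (P 0 - P (-0))) :=
        ((hPc.tendsto 0).sub ((hPc.comp continuous_neg).tendsto 0))
      simp only [neg_zero, sub_self] at h5
      exact tendsto_nhdsWithin_of_tendsto_nhds h5
  have := (tendsto_const_nhds (x := ∫ x : ℝ, G x) (f := nhdsWithin (0:ℝ) (Set.Ioi 0))).sub hIcc
  simpa using this


lemma boundary_tendsto (φ : SchwartzMap ℝ ℂ) :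
    Tendsto (fun ε : ℝ => (Real.log ε : ℂ) * (φ (-ε) - φ ε)) (nhdsWithin 0 (Set.Ioi 0)) (nhds 0) := by
  set ψ := SchwartzMap.derivCLM ℝ ℂ φ with hψdef
  set C := SchwartzMap.seminorm ℝ 0 0 ψ with hCdef
  have hC : ∀ x, ‖ψ x‖ ≤ C := fun x => SchwartzMap.norm_le_seminorm ℝ ψ x
  have hψ : ∀ x : ℝ, HasDerivAt (fun y : ℝ => φ y) (ψ x) x := by
    intro x
    have := (φ.differentiable x).hasDerivAt
    rwa [← SchwartzMap.derivCLM_apply (𝕜 := ℝ)] at this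
  refine squeeze_zero_norm' (a := fun ε : ℝ => 2 * C * |Real.log ε * ε|) ?_ ?_
  · filter_upwards [self_mem_nhdsWithin] with ε (hε : (0:ℝ) < ε)
    have hmvt := norm_image_sub_le_of_norm_deriv_le_segment' (a := -ε) (b := ε)
      (f := fun y : ℝ => φ y) (f' := fun x : ℝ => ψ x) (C := C)
      (fun x _ => (hψ x).hasDerivWithinAt) (fun x _ => hC x) ε (right_mem_Icc.2 (by linarith))
    calc ‖(Real.log ε : ℂ) * (φ (-ε) - φ ε)‖ = |Real.log ε| * ‖φ (-ε) - φ ε‖ := by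
          rw [norm_mul, Complex.norm_real, Real.norm_eq_abs]
      _ = |Real.log ε| * ‖φ ε - φ (-ε)‖ := by rw [norm_sub_rev]
      _ ≤ |Real.log ε| * (C * (ε - -ε)) := by
          gcongr
      _ = 2 * C * (|Real.log ε| * ε) := by ring
      _ = 2 * C * |Real.log ε * ε| := by rw [abs_mul, abs_of_pos hε]
  · have h := (tendsto_log_mul_rpow_nhdsGT_zero zero_lt_one).abs
    simp only [Real.rpow_one, abs_zero] at h
    simpa using h.const_mul (2 * C)

/-- Dirac's formula for the distributional derivative of `log x` (branch `log(−1) = −iπ`):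
`−∫ L(x) φ′(x) dx = Vp(1/x)[φ] + iπ φ(0)`, the principal-value limit existing. -/
theorem deriv_branch_log (φ : SchwartzMap ℝ ℂ) :
    ∃ pv : ℂ,
      Tendsto (fun ε : ℝ => ∫ x in {x : ℝ | ε < |x|}, φ x / (x : ℂ))
        (nhdsWithin 0 (Set.Ioi 0)) (nhds pv) ∧
      -∫ x : ℝ, branchLog x * deriv (fun y : ℝ => φ y) x = pv + Complex.I * (π : ℂ) * φ 0 := by
  set ψ := SchwartzMap.derivCLM ℝ ℂ φ with hψdef
  have hψ : ∀ x : ℝ, HasDerivAt (fun y : ℝ => φ y) (ψ x) x := by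
    intro x
    have := (φ.differentiable x).hasDerivAt
    rwa [← SchwartzMap.derivCLM_apply (𝕜 := ℝ)] at this
  have hG : Integrable (fun x : ℝ => (Real.log x : ℂ) * ψ x) := integrable_log_mul_schwartz ψ
  refine ⟨-∫ x : ℝ, (Real.log x : ℂ) * ψ x, ?_, ?_⟩
  · have h1 := (trunc_tendsto hG).neg
    have h2 := boundary_tendsto φ
    have h3 := h1.add h2
    rw [add_zero] at h3
    refine h3.congr' ?_
    filter_upwards [self_mem_nhdsWithin] with ε (hε : (0:ℝ) < ε)
    exact (key_identity φ hε).symm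
  · have hderiv_eq : ∀ x : ℝ, deriv (fun y : ℝ => φ y) x = ψ x :=
      fun x => (SchwartzMap.derivCLM_apply (𝕜 := ℝ) (f := φ) (x := x)).symm
    have hsplit : ∀ x : ℝ, branchLog x * ψ x
        = (Real.log x : ℂ) * ψ x
          - (Iio (0:ℝ)).indicator (fun x => Complex.I * (π : ℂ) * ψ x) x := by
      intro x
      by_cases hx : x < 0
      · rw [Set.indicator_of_mem (show x ∈ Iio 0 from hx)]
        simp only [branchLog, if_pos hx, Real.log_abs]
        ring
      · rw [Set.indicator_of_notMem (by simpa using hx)]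
        simp only [branchLog, if_neg hx, Real.log_abs]
        ring
    have hInd : Integrable ((Iio (0:ℝ)).indicator (fun x => Complex.I * (π : ℂ) * ψ x)) :=
      ((ψ.integrable).const_mul _).indicator measurableSet_Iio
    have hIio0 : ∫ x in Iio (0:ℝ), ψ x = φ 0 := by
      rw [setIntegral_congr_set Iio_ae_eq_Iic]
      have := integral_Iic_of_hasDerivAt_of_tendsto' (a := (0:ℝ)) (f := fun y : ℝ => φ y)
        (f' := fun x : ℝ => ψ x) (m := 0) (fun x _ => hψ x)
        (ψ.integrable.integrableOn) (schwartz_tendsto_atBot φ)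
      simpa using this
    have hmain : ∫ x : ℝ, branchLog x * deriv (fun y : ℝ => φ y) x
        = (∫ x : ℝ, (Real.log x : ℂ) * ψ x) - Complex.I * (π : ℂ) * φ 0 := by
      have hcongr : (fun x : ℝ => branchLog x * deriv (fun y : ℝ => φ y) x)
          = fun x : ℝ => (Real.log x : ℂ) * ψ x
            - (Iio (0:ℝ)).indicator (fun x => Complex.I * (π : ℂ) * ψ x) x := by
        funext x
        rw [hderiv_eq x]
        exact hsplit x
      rw [hcongr, integral_sub hG hInd, integral_indicator measurableSet_Iio,
        MeasureTheory.integral_const_mul, hIio0]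
    rw [hmain]
    ring
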